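/- Let n and d be positive integers and let I ⊆ V be a homogeneous B_Y-saturated ideal. Then Υ(I) is a B_X-saturated ideal of S. -/

import Mathlib

/-!
Common setup, following the paper "On the abundance of minimal border rank symmetric
tensors verifying Comon's conjecture".

* `S = ℂ[α_{i,j} : 1 ≤ i ≤ d, 1 ≤ j ≤ n]` is modeled as `MvPolynomial (Fin d × Fin n) ℂ`,
  with the `ℤ^d`-grading in which `deg α_{i,j} = e_i`; `Scomp n d u` is the
  multidegree-`u` component (`u : Fin d → ℕ`).
* `V = ℂ[β_1,…,β_n]` is modeled as `MvPolynomial (Fin n) ℂ` with its standard grading;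
  `Vcomp n N` is the degree-`N` component.
* The graded duals `T` and `P` are modeled by the same polynomial rings, with `S`
  (resp. `V`) acting by differentiation (`apolar`); `ann F` is the apolar
  (annihilator) ideal of `F`.
* A tensor `F ∈ (ℂ^n)^{⊗d}` is an element of the multidegree-`(1,…,1)` component
  `Scomp n d (fun _ => 1)` (a multilinear form in the `x_{i,j}`).
-/

open MvPolynomial Submodule Module

noncomputable section

namespace BorderComon

/-- the multidegree-`u` graded component of `S`. -/
def Scomp (n d : ℕ) (u : Fin d → ℕ) : Submodule ℂ (MvPolynomial (Fin d × Fin n) ℂ) :=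
  weightedHomogeneousSubmodule ℂ (fun p : Fin d × Fin n => Pi.single p.1 1) u

/-- the degree-`N` graded component of `V`. -/
def Vcomp (n : ℕ) (N : ℕ) : Submodule ℂ (MvPolynomial (Fin n) ℂ) :=
  homogeneousSubmodule (Fin n) ℂ N

/-- the diagonal ring map `π : S → V`, `α_{i,j} ↦ β_j`. -/
def piAlg (n d : ℕ) : MvPolynomial (Fin d × Fin n) ℂ →ₐ[ℂ] MvPolynomial (Fin n) ℂ :=
  aeval (fun p : Fin d × Fin n => X p.2)

/-- `π` as a `ℂ`-linear map. -/
def piL (n d : ℕ) : MvPolynomial (Fin d × Fin n) ℂ →ₗ[ℂ] MvPolynomial (Fin n) ℂ :=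
  (piAlg n d).toLinearMap

/-- the ring map `ρ : S → V`, `α_{1,j} ↦ β_j` and `α_{i,j} ↦ 0` for `i ≥ 2`
(rows are `0`-indexed, so the first row is row `0`). -/
def rho (n d : ℕ) : MvPolynomial (Fin d × Fin n) ℂ →ₐ[ℂ] MvPolynomial (Fin n) ℂ :=
  aeval (fun p : Fin d × Fin n => if (p.1 : ℕ) = 0 then X p.2 else 0)

/-- the result of differentiating `F` by the monomial `X^a`:
`∂^a X^b = (∏_i b_i!/(b_i-a_i)!) X^{b-a}` (and `= 0` unless `a ≤ b`, which is
automatic since the descending factorial vanishes there). -/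
def diffMon {σ : Type*} (a : σ →₀ ℕ) (F : MvPolynomial σ ℂ) : MvPolynomial σ ℂ :=
  ∑ b ∈ F.support, (F.coeff b * ∏ i ∈ a.support, ((b i).descFactorial (a i) : ℂ)) •
    monomial (b - a) (1 : ℂ)

/-- the apolarity action: `apolar F ψ = ψ ∘ F` is the result of letting `ψ` act on `F`
by differentiation, linearly in `ψ`. -/
def apolar {σ : Type*} (F : MvPolynomial σ ℂ) : MvPolynomial σ ℂ →ₗ[ℂ] MvPolynomial σ ℂ :=
  Finsupp.lsum ℂ (fun a : σ →₀ ℕ => LinearMap.toSpanSingleton ℂ _ (diffMon a F)) ∘ₗ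
    (AddMonoidAlgebra.coeffLinearEquiv ℂ : AddMonoidAlgebra ℂ (σ →₀ ℕ) ≃ₗ[ℂ] _).toLinearMap

/-- the apolar (annihilator) ideal `Ann(F) = {ψ : ψ ∘ F = 0}`, as a subspace. -/
def ann {σ : Type*} (F : MvPolynomial σ ℂ) : Submodule ℂ (MvPolynomial σ ℂ) :=
  LinearMap.ker (apolar F)

/-- the ideal `I_R ⊆ S` generated by the `2×2` minors
`α_{i,j} α_{k,ℓ} − α_{i,ℓ} α_{k,j}`, `i < k`, `j < ℓ`. -/
def IR (n d : ℕ) : Ideal (MvPolynomial (Fin d × Fin n) ℂ) :=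
  Ideal.span {q | ∃ i k : Fin d, ∃ j l : Fin n, i < k ∧ j < l ∧
    q = X (i, j) * X (k, l) - X (i, l) * X (k, j)}

/-- `J ⊆ S` is a (multigraded) homogeneous ideal: it is the sum of its
multigraded components. -/
def IsHomogS (n d : ℕ) (J : Ideal (MvPolynomial (Fin d × Fin n) ℂ)) : Prop :=
  Submodule.restrictScalars ℂ J = ⨆ u : Fin d → ℕ, (Submodule.restrictScalars ℂ J ⊓ Scomp n d u)

/-- `I ⊆ V` is a homogeneous ideal: it is the sum of its graded components. -/
def IsHomogV (n : ℕ) (I : Ideal (MvPolynomial (Fin n) ℂ)) : Prop :=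
  Submodule.restrictScalars ℂ I = ⨆ N : ℕ, (Submodule.restrictScalars ℂ I ⊓ Vcomp n N)

/-- the exponent redistribution underlying `ψ_u`: in the sorted list
`i_1 ≤ ⋯ ≤ i_N` of the indices of the monomial `β^γ` (value `j` occurring `γ j`
times, `N = |γ|`), row `i` receives the block of positions
`[∑_{i'<i} u i', ∑_{i'≤i} u i')`, while value `j` occupies positions
`[∑_{j'<j} γ j', ∑_{j'≤j} γ j')`; hence the exponent of `α_{i,j}` is the size of
the intersection of these two intervals. -/
def distrib (n d : ℕ) (u : Fin d → ℕ) (γ : Fin n →₀ ℕ) : (Fin d × Fin n) →₀ ℕ :=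
  Finsupp.equivFunOnFinite.symm fun p : Fin d × Fin n =>
    min (∑ i ∈ Finset.univ.filter fun i : Fin d => (i : ℕ) ≤ (p.1 : ℕ), u i)
        (∑ j ∈ Finset.univ.filter fun j : Fin n => (j : ℕ) ≤ (p.2 : ℕ), γ j)
    - max (∑ i ∈ Finset.univ.filter fun i : Fin d => (i : ℕ) < (p.1 : ℕ), u i)
          (∑ j ∈ Finset.univ.filter fun j : Fin n => (j : ℕ) < (p.2 : ℕ), γ j)

/-- the linear map `ψ_u : V → S` sending a monomial `β_{i_1} β_{i_2} ⋯ β_{i_N}`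
with `i_1 ≤ i_2 ≤ ⋯ ≤ i_N` to
`(α_{1,i_1} ⋯ α_{1,i_{u_1}}) (α_{2,i_{u_1+1}} ⋯ α_{2,i_{u_1+u_2}}) ⋯`.
(Its restriction to `Vcomp n (∑ i, u i)` is the map `ψ_u : V_{|u|} → S_u` of the
paper.) -/
def psi (n d : ℕ) (u : Fin d → ℕ) :
    MvPolynomial (Fin n) ℂ →ₗ[ℂ] MvPolynomial (Fin d × Fin n) ℂ :=
  AddMonoidAlgebra.mapDomainLinearMap ℂ ℂ (distrib n d u)

/-- `Υ(I) = I_R + ∑_{u} ψ_u(I_{|u|}) ⊆ S`. -/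
def Upsilon (n d : ℕ) (I : Ideal (MvPolynomial (Fin n) ℂ)) :
    Submodule ℂ (MvPolynomial (Fin d × Fin n) ℂ) :=
  restrictScalars ℂ (IR n d) ⊔
    ⨆ u : Fin d → ℕ, Submodule.map (psi n d u) (restrictScalars ℂ I ⊓ Vcomp n (∑ i, u i))

/-- the irrelevant ideal `B_X = ∏_{i=1}^d (α_{i,1},…,α_{i,n}) ⊆ S`. -/
def BX (n d : ℕ) : Ideal (MvPolynomial (Fin d × Fin n) ℂ) :=
  ∏ i : Fin d, Ideal.span (Set.range fun j : Fin n => X (i, j))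

/-- the irrelevant ideal `B_Y = (β_1,…,β_n) ⊆ V`. -/
def BY (n : ℕ) : Ideal (MvPolynomial (Fin n) ℂ) :=
  Ideal.span (Set.range X)

/-- `Σ(J) = ⊕_{a ≥ 0} ⊕_{s ∈ ℰ} π(J_{a𝟏+s}) ⊆ V`, where
`ℰ = {0, e_1, e_1+e_2, …, e_1+⋯+e_{d-1}}` (the element `s` with `m` ones is
`fun i => if i < m then 1 else 0`). -/
def SigmaMap (n d : ℕ) (J : Ideal (MvPolynomial (Fin d × Fin n) ℂ)) :
    Submodule ℂ (MvPolynomial (Fin n) ℂ) :=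
  ⨆ a : ℕ, ⨆ m : Fin d, Submodule.map (piL n d)
    (restrictScalars ℂ J ⊓ Scomp n d (fun i => a + if (i : ℕ) < (m : ℕ) then 1 else 0))

/-- the set of tensors of rank at most `r`: sums of `r` decomposable tensors
`v_1 ⊗ ⋯ ⊗ v_d = ∏_i (∑_j v_i(j) x_{i,j})`. -/
def rankLE (n d r : ℕ) : Set (MvPolynomial (Fin d × Fin n) ℂ) :=
  {F | ∃ v : Fin r → Fin d → Fin n → ℂ,
    F = ∑ s : Fin r, ∏ i : Fin d, ∑ j : Fin n, C (v s i j) * X (i, j)}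

/-- `F` has border rank at most `r`: coefficientwise (finitely many coefficients are
involved), `F` lies in the closure of the set of tensors of rank at most `r`. -/
def brkLE (n d : ℕ) (F : MvPolynomial (Fin d × Fin n) ℂ) (r : ℕ) : Prop :=
  (fun m => coeff m F) ∈ closure ((fun G => fun m => coeff m G) '' rankLE n d r)

/-- the border rank of a tensor. -/
def brk (n d : ℕ) (F : MvPolynomial (Fin d × Fin n) ℂ) : ℕ :=
  sInf {r | brkLE n d F r}

/-- polynomials that are sums of `r` `d`-th powers of linear forms. -/
def srankLE (n d r : ℕ) : Set (MvPolynomial (Fin n) ℂ) :=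
  {p | ∃ c : Fin r → Fin n → ℂ, p = ∑ s : Fin r, (∑ j : Fin n, C (c s j) * X j) ^ d}

/-- `p` has symmetric border rank at most `r`. -/
def sbrkLE (n d : ℕ) (p : MvPolynomial (Fin n) ℂ) (r : ℕ) : Prop :=
  (fun m => coeff m p) ∈ closure ((fun q => fun m => coeff m q) '' srankLE n d r)

/-- the symmetric border rank of a degree-`d` form. -/
def sbrk (n d : ℕ) (p : MvPolynomial (Fin n) ℂ) : ℕ :=
  sInf {r | sbrkLE n d p r}

/-- `F` is a symmetric tensor: invariant under the permutations of the `d` factors. -/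
def IsSymm (n d : ℕ) (F : MvPolynomial (Fin d × Fin n) ℂ) : Prop :=
  ∀ τ : Equiv.Perm (Fin d), rename (Prod.map τ id) F = F

/-- the degree-`d` polynomial `p_F` corresponding to a symmetric tensor `F`, obtained
by identifying all the rows of variables (`x_{i,j} ↦ y_j`); `F` is the polarization
of `p_F`. -/
def pF (n d : ℕ) (F : MvPolynomial (Fin d × Fin n) ℂ) : MvPolynomial (Fin n) ℂ :=
  rename Prod.snd F

/-- `F` is concise: the contraction `(ℂ^n)^* → (ℂ^n)^{⊗(d-1)}` of the first tensor
factor, `w ↦ F(x_{1,j} := w_j)`, is injective. -/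
def Concise (n d : ℕ) (F : MvPolynomial (Fin d × Fin n) ℂ) : Prop :=
  Function.Injective fun w : Fin n → ℂ =>
    aeval (fun p : Fin d × Fin n => if (p.1 : ℕ) = 0 then C (w p.2) else X p) F

/-- the ideal `∑_{0<u<𝟏} S·Ann(F)_u` generated by the components `Ann(F)_u`,
`0 < u < 𝟏` (componentwise). -/
def midIdeal (n d : ℕ) (F : MvPolynomial (Fin d × Fin n) ℂ) :
    Ideal (MvPolynomial (Fin d × Fin n) ℂ) :=
  Ideal.span (⋃ u ∈ {u : Fin d → ℕ | 0 < u ∧ u < fun _ => 1},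
    ((ann F ⊓ Scomp n d u : Submodule ℂ (MvPolynomial (Fin d × Fin n) ℂ)) :
      Set (MvPolynomial (Fin d × Fin n) ℂ)))

/-- `F` is a *sharp* tensor:
(1) `Ann(F)` has exactly `n-1` minimal generators of multidegree `𝟏`;
(2) `dim (S/Ann F)_u = n` for all `0 < u < 𝟏`;
(3) `dim (S/(Ann(F)_{e_i+e_j}))_{s e_i + e_j} = n` for all `i ≠ j`, `1 ≤ s ≤ d-1`. -/
def Sharp (n d : ℕ) (F : MvPolynomial (Fin d × Fin n) ℂ) : Prop :=
  (finrank ℂ (ann F ⊓ Scomp n d fun _ => 1 :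
        Submodule ℂ (MvPolynomial (Fin d × Fin n) ℂ)) -
      finrank ℂ (restrictScalars ℂ (midIdeal n d F) ⊓ Scomp n d fun _ => 1 :
        Submodule ℂ (MvPolynomial (Fin d × Fin n) ℂ)) = n - 1) ∧
  (∀ u : Fin d → ℕ, 0 < u → u < (fun _ => 1) →
    finrank ℂ (Scomp n d u ⧸ Submodule.comap (Scomp n d u).subtype (ann F)) = n) ∧
  (∀ i j : Fin d, i ≠ j → ∀ s : ℕ, 1 ≤ s → s ≤ d - 1 →
    finrank ℂ (Scomp n d (Pi.single i s + Pi.single j 1) ⧸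
      Submodule.comap (Scomp n d (Pi.single i s + Pi.single j 1)).subtype
        (restrictScalars ℂ (Ideal.span
          ((ann F ⊓ Scomp n d (Pi.single i 1 + Pi.single j 1) :
            Submodule ℂ (MvPolynomial (Fin d × Fin n) ℂ)) :
            Set (MvPolynomial (Fin d × Fin n) ℂ))))) = n)



/-- partial sum of the first `t` values of `u`. -/
def psum {k : ℕ} (u : Fin k → ℕ) (t : ℕ) : ℕ :=
  ∑ i ∈ Finset.univ.filter fun i : Fin k => (i : ℕ) < t, u i

lemma psum_mono {k : ℕ} (u : Fin k → ℕ) : Monotone (psum u) := by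
  intro s t hst
  apply Finset.sum_le_sum_of_subset
  intro i hi
  simp only [Finset.mem_filter, Finset.mem_univ, true_and] at hi ⊢
  omega

lemma psum_zero {k : ℕ} (u : Fin k → ℕ) : psum u 0 = 0 := by
  simp [psum]

lemma psum_top {k : ℕ} (u : Fin k → ℕ) {t : ℕ} (ht : k ≤ t) :
    psum u t = ∑ i, u i := by
  unfold psum
  congr 1
  rw [Finset.filter_true_of_mem]
  intro i _
  exact lt_of_lt_of_le i.isLt ht

lemma psum_succ_fin {k : ℕ} (u : Fin k → ℕ) (i : Fin k) :
    psum u ((i : ℕ) + 1) = psum u (i : ℕ) + u i := by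
  unfold psum
  have h : (Finset.univ.filter fun j : Fin k => (j : ℕ) < (i : ℕ) + 1) =
      insert i (Finset.univ.filter fun j : Fin k => (j : ℕ) < (i : ℕ)) := by
    ext j
    simp only [Finset.mem_filter, Finset.mem_univ, true_and, Finset.mem_insert, Fin.ext_iff]
    omega
  rw [h, Finset.sum_insert (by simp)]
  ring

section Helpers

variable {n d : ℕ}

lemma distrib_apply (u : Fin d → ℕ) (γ : Fin n →₀ ℕ) (p : Fin d × Fin n) :
    distrib n d u γ p =
      min (psum u ((p.1 : ℕ) + 1)) (psum (fun j => γ j) ((p.2 : ℕ) + 1))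
        - max (psum u (p.1 : ℕ)) (psum (fun j => γ j) (p.2 : ℕ)) := by
  have h1 : ∀ (k : ℕ) (v : Fin k → ℕ) (t : ℕ),
      (∑ i ∈ Finset.univ.filter fun i : Fin k => (i : ℕ) ≤ t, v i) = psum v (t + 1) := by
    intro k v t
    unfold psum
    congr 1
    ext i
    simp [Nat.lt_succ_iff]
  simp only [distrib, Finsupp.coe_equivFunOnFinite_symm, h1]
  rfl

lemma rowsum_distrib (u : Fin d → ℕ) (γ : Fin n →₀ ℕ)
    (h : ∑ j, γ j = ∑ i, u i) (i : Fin d) :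
    ∑ j, distrib n d u γ (i, j) = u i := by
  set F : ℕ → ℕ := fun t =>
    min (psum u ((i : ℕ) + 1)) (psum (fun j' => γ j') t) - min (psum u (i : ℕ)) (psum (fun j' => γ j') t) with hF
  have hmono : Monotone F := by
    intro s t hst
    have h1 := psum_mono (fun j' => γ j') hst
    have h2 := psum_mono u (Nat.le_add_right (i : ℕ) 1)
    simp only [hF]
    omega
  have hstep : ∀ j : Fin n, distrib n d u γ (i, j) = F ((j : ℕ) + 1) - F (j : ℕ) := by
    intro j
    rw [distrib_apply]
    have h1 := psum_mono (fun j' => γ j') (Nat.le_add_right (j : ℕ) 1)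
    have h2 := psum_mono u (Nat.le_add_right (i : ℕ) 1)
    simp only [hF]
    omega
  calc ∑ j, distrib n d u γ (i, j) = ∑ j : Fin n, (F ((j : ℕ) + 1) - F (j : ℕ)) :=
        Finset.sum_congr rfl fun j _ => hstep j
    _ = ∑ t ∈ Finset.range n, (F (t + 1) - F t) := by
        rw [Fin.sum_univ_eq_sum_range (fun t => F (t + 1) - F t)]
    _ = F n - F 0 := Finset.sum_range_tsub hmono n
    _ = u i := by
        have h1 : psum (fun j' => γ j') n = ∑ i', u i' := by rw [psum_top (fun j' => γ j') le_rfl]; exact h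
        have h2 := psum_succ_fin u i
        have h3 : psum u ((i : ℕ) + 1) ≤ ∑ i', u i' := by
          rw [← psum_top u (le_refl d)]
          exact psum_mono u i.isLt
        have h4 := psum_zero (fun j' => γ j')
        have h5 := psum_mono u (Nat.le_add_right (i : ℕ) 1)
        simp only [hF]
        omega

lemma colsum_distrib (u : Fin d → ℕ) (γ : Fin n →₀ ℕ)
    (h : ∑ j, γ j = ∑ i, u i) (j : Fin n) :
    ∑ i, distrib n d u γ (i, j) = γ j := by
  set F : ℕ → ℕ := fun t =>
    min (psum u t) (psum (fun j' => γ j') ((j : ℕ) + 1)) - min (psum u t) (psum (fun j' => γ j') (j : ℕ)) with hF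
  have hmono : Monotone F := by
    intro s t hst
    have h1 := psum_mono u hst
    have h2 := psum_mono (fun j' => γ j') (Nat.le_add_right (j : ℕ) 1)
    simp only [hF]
    omega
  have hstep : ∀ i : Fin d, distrib n d u γ (i, j) = F ((i : ℕ) + 1) - F (i : ℕ) := by
    intro i
    rw [distrib_apply]
    have h1 := psum_mono (fun j' => γ j') (Nat.le_add_right (j : ℕ) 1)
    have h2 := psum_mono u (Nat.le_add_right (i : ℕ) 1)
    simp only [hF]
    omega
  calc ∑ i, distrib n d u γ (i, j) = ∑ i : Fin d, (F ((i : ℕ) + 1) - F (i : ℕ)) :=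
        Finset.sum_congr rfl fun i _ => hstep i
    _ = ∑ t ∈ Finset.range d, (F (t + 1) - F t) := by
        rw [Fin.sum_univ_eq_sum_range (fun t => F (t + 1) - F t)]
    _ = F d - F 0 := Finset.sum_range_tsub hmono d
    _ = γ j := by
        have h1 : psum u d = ∑ i', u i' := psum_top u le_rfl
        have h2 := psum_succ_fin (fun j' => γ j') j
        have h3 : psum (fun j' => γ j') ((j : ℕ) + 1) ≤ ∑ i', u i' := by
          rw [← h, ← psum_top (fun j' => γ j') (le_refl n)]
          exact psum_mono (fun j' => γ j') j.isLt
        have h4 := psum_zero u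
        have h5 := psum_mono (fun j' => γ j') (Nat.le_add_right (j : ℕ) 1)
        simp only [hF]
        omega

end Helpers
section Straighten

variable {n d : ℕ}

/-- partial rectangle sums of a matrix of exponents. -/
def Bsum (b : (Fin d × Fin n) →₀ ℕ) (s t : ℕ) : ℕ :=
  ∑ p : Fin d × Fin n, if (p.1 : ℕ) < s ∧ (p.2 : ℕ) < t then b p else 0

lemma row_restrict (b : (Fin d × Fin n) →₀ ℕ) (s : ℕ) :
    (∑ p : Fin d × Fin n, if (p.1 : ℕ) < s then b p else 0) =
      psum (fun i => ∑ j, b (i, j)) s := by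
  rw [Fintype.sum_prod_type]
  unfold psum
  rw [Finset.sum_filter]
  apply Finset.sum_congr rfl
  intro i _
  split_ifs with h
  · rfl
  · exact Finset.sum_const_zero

lemma col_restrict (b : (Fin d × Fin n) →₀ ℕ) (t : ℕ) :
    (∑ p : Fin d × Fin n, if (p.2 : ℕ) < t then b p else 0) =
      psum (fun j => ∑ i, b (i, j)) t := by
  rw [Fintype.sum_prod_type_right]
  unfold psum
  rw [Finset.sum_filter]
  apply Finset.sum_congr rfl
  intro j _
  split_ifs with h
  · rfl
  · exact Finset.sum_const_zero

lemma Bsum_le_row (b : (Fin d × Fin n) →₀ ℕ) (s t : ℕ) :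
    Bsum b s t ≤ psum (fun i => ∑ j, b (i, j)) s := by
  rw [← row_restrict]
  apply Finset.sum_le_sum
  intro p _
  split_ifs <;> omega

lemma Bsum_le_col (b : (Fin d × Fin n) →₀ ℕ) (s t : ℕ) :
    Bsum b s t ≤ psum (fun j => ∑ i, b (i, j)) t := by
  rw [← col_restrict]
  apply Finset.sum_le_sum
  intro p _
  split_ifs <;> omega

lemma Bsum_eq (b : (Fin d × Fin n) →₀ ℕ)
    (hs : ∀ p q : Fin d × Fin n, b p ≠ 0 → b q ≠ 0 → (p.1 : ℕ) < (q.1 : ℕ) →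
      (p.2 : ℕ) ≤ (q.2 : ℕ)) (s t : ℕ) :
    Bsum b s t = min (psum (fun i => ∑ j, b (i, j)) s) (psum (fun j => ∑ i, b (i, j)) t) := by
  refine le_antisymm (le_min (Bsum_le_row b s t) (Bsum_le_col b s t)) ?_
  by_contra hlt
  push_neg at hlt
  rw [lt_min_iff] at hlt
  obtain ⟨h1, h2⟩ := hlt
  rw [← row_restrict] at h1
  rw [← col_restrict] at h2
  have e1 : ∃ p : Fin d × Fin n, b p ≠ 0 ∧ (p.1 : ℕ) < s ∧ t ≤ (p.2 : ℕ) := by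
    by_contra hc
    push_neg at hc
    have heq : Bsum b s t = ∑ p : Fin d × Fin n, if (p.1 : ℕ) < s then b p else 0 := by
      unfold Bsum
      apply Finset.sum_congr rfl
      intro p _
      by_cases hbp : b p = 0
      · split_ifs <;> simp [hbp]
      · have h3 := hc p hbp
        split_ifs <;> omega
    rw [← heq] at h1
    exact lt_irrefl _ h1
  have e2 : ∃ q : Fin d × Fin n, b q ≠ 0 ∧ (q.2 : ℕ) < t ∧ s ≤ (q.1 : ℕ) := by
    by_contra hc
    push_neg at hc
    have heq : Bsum b s t = ∑ p : Fin d × Fin n, if (p.2 : ℕ) < t then b p else 0 := by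
      unfold Bsum
      apply Finset.sum_congr rfl
      intro p _
      by_cases hbp : b p = 0
      · split_ifs <;> simp [hbp]
      · have h3 := hc p hbp
        split_ifs <;> omega
    rw [← heq] at h2
    exact lt_irrefl _ h2
  obtain ⟨p, hp, hps, hpt⟩ := e1
  obtain ⟨q, hq, hqt, hqs⟩ := e2
  have := hs p q hp hq (by omega)
  omega

lemma Bsum_rect (b : (Fin d × Fin n) →₀ ℕ) (i : Fin d) (j : Fin n) :
    Bsum b ((i : ℕ) + 1) ((j : ℕ) + 1) + Bsum b (i : ℕ) (j : ℕ) =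
      Bsum b (i : ℕ) ((j : ℕ) + 1) + Bsum b ((i : ℕ) + 1) (j : ℕ) + b (i, j) := by
  unfold Bsum
  have hb : b (i, j) = ∑ p : Fin d × Fin n, if p = (i, j) then b p else 0 := by
    rw [Finset.sum_ite_eq' Finset.univ (i, j) b]
    simp
  rw [hb, ← Finset.sum_add_distrib, ← Finset.sum_add_distrib, ← Finset.sum_add_distrib]
  apply Finset.sum_congr rfl
  intro p _
  have hp : (p = (i, j)) = ((p.1 : ℕ) = (i : ℕ) ∧ (p.2 : ℕ) = (j : ℕ)) := by
    rw [eq_iff_iff]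
    rw [Prod.ext_iff, Fin.ext_iff, Fin.ext_iff]
  simp only [hp]
  split_ifs <;> omega

end Straighten
section Straighten2

variable {n d : ℕ}

lemma sum_single_row (r : Fin d × Fin n) (v : ℕ) (i : Fin d) :
    ∑ j : Fin n, (Finsupp.single r v) (i, j) = if r.1 = i then v else 0 := by
  obtain ⟨r1, r2⟩ := r
  simp only [Finsupp.single_apply, Prod.mk.injEq]
  by_cases h : r1 = i
  · subst h
    simp
  · simp [h]

lemma sum_single_col (r : Fin d × Fin n) (v : ℕ) (j : Fin n) :
    ∑ i : Fin d, (Finsupp.single r v) (i, j) = if r.2 = j then v else 0 := by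
  obtain ⟨r1, r2⟩ := r
  simp only [Finsupp.single_apply, Prod.mk.injEq]
  by_cases h : r2 = j
  · subst h
    simp
  · simp [h]

lemma sum_single_weight (r : Fin d × Fin n) (v : ℕ) (W : Fin d × Fin n → ℕ) :
    ∑ p : Fin d × Fin n, (Finsupp.single r v) p * W p = v * W r := by
  have h : ∀ p : Fin d × Fin n, (Finsupp.single r v) p * W p =
      if r = p then v * W p else 0 := by
    intro p
    rw [Finsupp.single_apply]
    split_ifs <;> ring
  rw [Finset.sum_congr rfl fun p _ => h p, Finset.sum_ite_eq Finset.univ r fun p => v * W p]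
  simp

/-- a "sorted" matrix of exponents with given margins equals `distrib`. -/
lemma sorted_eq_distrib (u : Fin d → ℕ) (γ : Fin n →₀ ℕ) (b : (Fin d × Fin n) →₀ ℕ)
    (hrow : ∀ i, ∑ j, b (i, j) = u i) (hcol : ∀ j, ∑ i, b (i, j) = γ j)
    (hs : ∀ p q : Fin d × Fin n, b p ≠ 0 → b q ≠ 0 → (p.1 : ℕ) < (q.1 : ℕ) →
      (p.2 : ℕ) ≤ (q.2 : ℕ)) :
    b = distrib n d u γ := by
  ext p
  obtain ⟨i, j⟩ := p
  rw [distrib_apply]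
  dsimp only
  have hru : (fun i' => ∑ j', b (i', j')) = u := funext hrow
  have hcγ : (fun j' => ∑ i', b (i', j')) = fun j' => γ j' := funext hcol
  have e1 := Bsum_rect b i j
  have k1 := Bsum_eq b hs ((i : ℕ) + 1) ((j : ℕ) + 1)
  have k2 := Bsum_eq b hs (i : ℕ) (j : ℕ)
  have k3 := Bsum_eq b hs (i : ℕ) ((j : ℕ) + 1)
  have k4 := Bsum_eq b hs ((i : ℕ) + 1) (j : ℕ)
  rw [hru, hcγ] at k1 k2 k3 k4
  rw [k1, k2, k3, k4] at e1
  have m1 := psum_mono u (Nat.le_add_right (i : ℕ) 1)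
  have m2 := psum_mono (fun j' => γ j') (Nat.le_add_right (j : ℕ) 1)
  omega

lemma minor_mem {i k : Fin d} {j l : Fin n} (hik : i < k) (hjl : j < l) :
    (X (i, j) * X (k, l) - X (i, l) * X (k, j) : MvPolynomial (Fin d × Fin n) ℂ) ∈ IR n d :=
  Ideal.subset_span ⟨i, k, j, l, hik, hjl, rfl⟩

lemma straighten_aux (u : Fin d → ℕ) (γ : Fin n →₀ ℕ) :
    ∀ (N : ℕ) (b : (Fin d × Fin n) →₀ ℕ),
      (∑ p : Fin d × Fin n, b p * (d * n - (p.1 : ℕ) * (p.2 : ℕ))) = N →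
      (∀ i, ∑ j, b (i, j) = u i) → (∀ j, ∑ i, b (i, j) = γ j) →
      (monomial b 1 : MvPolynomial (Fin d × Fin n) ℂ) - monomial (distrib n d u γ) 1
        ∈ IR n d := by
  intro N
  induction N using Nat.strong_induction_on with
  | _ N IH =>
    intro b hN hrow hcol
    by_cases hv : ∃ p q : Fin d × Fin n, b p ≠ 0 ∧ b q ≠ 0 ∧ (p.1 : ℕ) < (q.1 : ℕ) ∧
        (q.2 : ℕ) < (p.2 : ℕ)
    · obtain ⟨p, q, hp, hq, hik, hlj⟩ := hv
      have hpq : p ≠ q := by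
        intro h
        rw [h] at hik
        omega
      set s1 : (Fin d × Fin n) →₀ ℕ := Finsupp.single p 1 + Finsupp.single q 1 with hs1
      set s2 : (Fin d × Fin n) →₀ ℕ :=
        Finsupp.single (p.1, q.2) 1 + Finsupp.single (q.1, p.2) 1 with hs2
      have hbp : 1 ≤ b p := Nat.one_le_iff_ne_zero.2 hp
      have hbq : 1 ≤ b q := Nat.one_le_iff_ne_zero.2 hq
      have hle : s1 ≤ b := by
        rw [Finsupp.le_def]
        intro r
        simp only [hs1, Finsupp.add_apply, Finsupp.single_apply]
        by_cases h1 : p = r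
        · subst h1
          rw [if_pos rfl, if_neg fun h => hpq h.symm]
          omega
        · rw [if_neg h1]
          by_cases h2 : q = r
          · subst h2
            rw [if_pos rfl]
            omega
          · rw [if_neg h2]
            omega
      set c : (Fin d × Fin n) →₀ ℕ := b - s1 with hc
      have hb_eq : b = c + s1 := (tsub_add_cancel_of_le hle).symm
      set b' : (Fin d × Fin n) →₀ ℕ := c + s2 with hb'
      have happ : ∀ r, b r = c r + s1 r := fun r => by
        conv_lhs => rw [hb_eq]
        simp [Finsupp.add_apply]
      have happ' : ∀ r, b' r = c r + s2 r := fun r => by simp [hb', Finsupp.add_apply]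
      have hrow' : ∀ i', ∑ j', b' (i', j') = u i' := by
        intro i'
        have h1 : ∑ j', b (i', j') = u i' := hrow i'
        simp only [happ, happ', hs1, hs2, Finsupp.add_apply, Finset.sum_add_distrib,
          sum_single_row] at h1 ⊢
        split_ifs at h1 ⊢ <;> omega
      have hcol' : ∀ j', ∑ i', b' (i', j') = γ j' := by
        intro j'
        have h1 : ∑ i', b (i', j') = γ j' := hcol j'
        simp only [happ, happ', hs1, hs2, Finsupp.add_apply, Finset.sum_add_distrib,
          sum_single_col] at h1 ⊢
        split_ifs at h1 ⊢ <;> omega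
      have key : (p.1 : ℕ) * (p.2 : ℕ) + (q.1 : ℕ) * (q.2 : ℕ) <
          (p.1 : ℕ) * (q.2 : ℕ) + (q.1 : ℕ) * (p.2 : ℕ) := by
        zify
        nlinarith [mul_pos (show (0 : ℤ) < ((q.1 : ℕ) : ℤ) - ((p.1 : ℕ) : ℤ) by omega)
          (show (0 : ℤ) < ((p.2 : ℕ) : ℤ) - ((q.2 : ℕ) : ℤ) by omega)]
      have hmeas : (∑ r : Fin d × Fin n, b' r * (d * n - (r.1 : ℕ) * (r.2 : ℕ))) < N := by
        rw [← hN]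
        have w1 : (p.1 : ℕ) * (p.2 : ℕ) ≤ d * n :=
          Nat.mul_le_mul (le_of_lt p.1.isLt) (le_of_lt p.2.isLt)
        have w2 : (q.1 : ℕ) * (q.2 : ℕ) ≤ d * n :=
          Nat.mul_le_mul (le_of_lt q.1.isLt) (le_of_lt q.2.isLt)
        have w3 : (p.1 : ℕ) * (q.2 : ℕ) ≤ d * n :=
          Nat.mul_le_mul (le_of_lt p.1.isLt) (le_of_lt q.2.isLt)
        have w4 : (q.1 : ℕ) * (p.2 : ℕ) ≤ d * n :=
          Nat.mul_le_mul (le_of_lt q.1.isLt) (le_of_lt p.2.isLt)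
        simp only [happ, happ', hs1, hs2, Finsupp.add_apply, add_mul,
          Finset.sum_add_distrib, sum_single_weight]
        omega
      have hx : ∀ r : Fin d × Fin n, (X r : MvPolynomial (Fin d × Fin n) ℂ) =
          monomial (Finsupp.single r 1) 1 := fun r => rfl
      have hmonprod : (monomial c (1 : ℂ)) *
          (X (p.1, q.2) * X (q.1, p.2) - X p * X q) =
            monomial b' 1 - monomial b 1 := by
        rw [mul_sub]
        simp only [hx, monomial_mul, mul_one, one_mul]
        rw [← hs2, ← hs1, ← hb', ← hb_eq]
      have hgen : (X (p.1, q.2) * X (q.1, p.2) - X p * X q :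
          MvPolynomial (Fin d × Fin n) ℂ) ∈ IR n d := by
        have h := minor_mem (n := n) (d := d)
          (show p.1 < q.1 from Fin.lt_def.2 hik) (show q.2 < p.2 from Fin.lt_def.2 hlj)
        convert h using 2
      have h1 : (monomial b (1 : ℂ) : MvPolynomial (Fin d × Fin n) ℂ) - monomial b' 1
          ∈ IR n d := by
        have h2 := Ideal.mul_mem_left _ (monomial c (1 : ℂ)) hgen
        rw [hmonprod] at h2
        have := neg_mem h2
        rw [neg_sub] at this
        exact this
      have h2 : (monomial b' (1 : ℂ) : MvPolynomial (Fin d × Fin n) ℂ) -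
          monomial (distrib n d u γ) 1 ∈ IR n d :=
        IH _ hmeas b' rfl hrow' hcol'
      have h3 := add_mem h1 h2
      rw [sub_add_sub_cancel] at h3
      exact h3
    · push_neg at hv
      have hb_eq : b = distrib n d u γ := sorted_eq_distrib u γ b hrow hcol hv
      rw [hb_eq, sub_self]
      exact zero_mem _

lemma straighten (u : Fin d → ℕ) (γ : Fin n →₀ ℕ) (b : (Fin d × Fin n) →₀ ℕ)
    (hrow : ∀ i, ∑ j, b (i, j) = u i) (hcol : ∀ j, ∑ i, b (i, j) = γ j) :
    (monomial b 1 : MvPolynomial (Fin d × Fin n) ℂ) - monomial (distrib n d u γ) 1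
      ∈ IR n d :=
  straighten_aux u γ _ b rfl hrow hcol

end Straighten2
section Bridge

variable {n d : ℕ}

/-- the weight function of the `ℤ^d`-grading. -/
abbrev wfun (n d : ℕ) : Fin d × Fin n → (Fin d → ℕ) := fun p => Pi.single p.1 1

lemma weight_wfun_apply (b : (Fin d × Fin n) →₀ ℕ) (i : Fin d) :
    (Finsupp.weight (wfun n d) b) i = ∑ j, b (i, j) := by
  rw [Finsupp.weight_apply, Finsupp.sum, Finset.sum_apply]
  have h1 : ∀ p : Fin d × Fin n, (b p • (Pi.single p.1 (1 : ℕ) : Fin d → ℕ)) i =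
      if i = p.1 then b p else 0 := by
    intro p
    rw [Pi.smul_apply, Pi.single_apply]
    split_ifs <;> simp
  rw [Finset.sum_congr rfl fun p _ => h1 p]
  rw [Finset.sum_subset (Finset.subset_univ b.support) (by
    intro p _ hp
    rw [Finsupp.notMem_support_iff.1 hp]
    simp)]
  rw [Fintype.sum_prod_type]
  have h2 : ∀ i' : Fin d, (∑ j, if i = (i', j).1 then b (i', j) else 0) =
      if i = i' then ∑ j, b (i', j) else 0 := by
    intro i'
    split_ifs with h
    · rfl
    · exact Finset.sum_const_zero
  rw [Finset.sum_congr rfl fun i' _ => h2 i', Finset.sum_ite_eq Finset.univ i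
    fun i' => ∑ j, b (i', j)]
  simp

lemma weight_distrib (u : Fin d → ℕ) (γ : Fin n →₀ ℕ) (h : ∑ j, γ j = ∑ i, u i) :
    Finsupp.weight (wfun n d) (distrib n d u γ) = u := by
  funext i
  rw [weight_wfun_apply]
  exact rowsum_distrib u γ h i

lemma mapDomain_snd_apply (b : (Fin d × Fin n) →₀ ℕ) (j : Fin n) :
    (Finsupp.mapDomain Prod.snd b) j = ∑ i, b (i, j) := by
  rw [Finsupp.mapDomain, Finsupp.sum_apply]
  have h1 : ∀ p : Fin d × Fin n, (Finsupp.single p.2 (b p)) j =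
      if p.2 = j then b p else 0 := fun p => Finsupp.single_apply
  rw [Finsupp.sum, Finset.sum_congr rfl fun p _ => h1 p]
  rw [Finset.sum_subset (Finset.subset_univ b.support) (by
    intro p _ hp
    rw [Finsupp.notMem_support_iff.1 hp]
    simp)]
  rw [Fintype.sum_prod_type_right]
  have h2 : ∀ j' : Fin n, (∑ i, if (i, j').2 = j then b (i, j') else 0) =
      if j' = j then ∑ i, b (i, j') else 0 := by
    intro j'
    split_ifs with h
    · rfl
    · exact Finset.sum_const_zero
  rw [Finset.sum_congr rfl fun j' _ => h2 j', Finset.sum_ite_eq' Finset.univ j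
    fun j' => ∑ i, b (i, j')]
  simp

lemma weight_one_eq (γ : Fin n →₀ ℕ) :
    Finsupp.weight (1 : Fin n → ℕ) γ = ∑ j, γ j := by
  rw [show (1 : Fin n → ℕ) = fun _ => 1 from rfl, ← Finsupp.degree_eq_weight_one, Finsupp.degree]
  exact Finset.sum_subset (Finset.subset_univ γ.support) (by
    intro j _ hj
    exact Finsupp.notMem_support_iff.1 hj)

lemma psi_monomial (u : Fin d → ℕ) (γ : Fin n →₀ ℕ) (c : ℂ) :
    psi n d u (monomial γ c) = monomial (distrib n d u γ) c := by
  rw [← single_eq_monomial, ← single_eq_monomial]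
  exact AddMonoidAlgebra.mapDomainLinearMap_single _ _ _

lemma piAlg_eq_rename : (piAlg n d : MvPolynomial (Fin d × Fin n) ℂ →ₐ[ℂ]
    MvPolynomial (Fin n) ℂ) = rename Prod.snd := by
  apply MvPolynomial.algHom_ext
  intro p
  simp [piAlg, rename_X]

lemma piL_monomial (b : (Fin d × Fin n) →₀ ℕ) (c : ℂ) :
    piL n d (monomial b c) = monomial (Finsupp.mapDomain Prod.snd b) c := by
  show piAlg n d (monomial b c) = _
  rw [piAlg_eq_rename, rename_monomial]

lemma piL_psi_monomial (u : Fin d → ℕ) (γ : Fin n →₀ ℕ) (c : ℂ)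
    (h : ∑ j, γ j = ∑ i, u i) :
    piL n d (psi n d u (monomial γ c)) = monomial γ c := by
  rw [psi_monomial, piL_monomial]
  have h0 : Finsupp.mapDomain Prod.snd (distrib n d u γ) = γ := by
    ext j
    rw [mapDomain_snd_apply]
    exact colsum_distrib u γ h j
  rw [h0]

lemma wHC_mul_monomial (f : MvPolynomial (Fin d × Fin n) ℂ) (β : (Fin d × Fin n) →₀ ℕ)
    (c : ℂ) (u : Fin d → ℕ) :
    weightedHomogeneousComponent (wfun n d) (u + Finsupp.weight (wfun n d) β)
        (f * monomial β c) =
      weightedHomogeneousComponent (wfun n d) u f * monomial β c := by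
  classical
  ext δ
  rw [coeff_weightedHomogeneousComponent, coeff_mul_monomial', coeff_mul_monomial',
    coeff_weightedHomogeneousComponent]
  by_cases hβδ : β ≤ δ
  · have hδ : (δ - β) + β = δ := tsub_add_cancel_of_le hβδ
    have hadd := map_add (Finsupp.weight (wfun n d)) (δ - β) β
    rw [hδ] at hadd
    rw [if_pos hβδ, if_pos hβδ]
    by_cases hw : Finsupp.weight (wfun n d) (δ - β) = u
    · rw [if_pos hw, if_pos (by rw [hadd, hw])]
    · rw [if_neg hw, if_neg (fun h => hw (add_right_cancel (hadd.symm.trans h))), zero_mul]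
  · rw [if_neg hβδ, if_neg hβδ, ite_self]

lemma wHC_mul_monomial_zero (f : MvPolynomial (Fin d × Fin n) ℂ)
    (β : (Fin d × Fin n) →₀ ℕ) (c : ℂ) (v : Fin d → ℕ)
    (hv : ∀ u' : Fin d → ℕ, u' + Finsupp.weight (wfun n d) β ≠ v) :
    weightedHomogeneousComponent (wfun n d) v (f * monomial β c) = 0 := by
  classical
  ext δ
  rw [coeff_weightedHomogeneousComponent, coeff_zero]
  by_cases hδv : Finsupp.weight (wfun n d) δ = v
  · rw [if_pos hδv, coeff_mul_monomial']
    by_cases hβδ : β ≤ δ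
    · exact absurd (by rw [← map_add, tsub_add_cancel_of_le hβδ, hδv]) (hv
        (Finsupp.weight (wfun n d) (δ - β)))
    · rw [if_neg hβδ]
  · rw [if_neg hδv]

end Bridge
section PolyLevel

variable {n d : ℕ}

lemma piL_IR {x : MvPolynomial (Fin d × Fin n) ℂ} (hx : x ∈ IR n d) : piL n d x = 0 := by
  have hle : IR n d ≤ RingHom.ker (piAlg n d).toRingHom := by
    rw [IR, Ideal.span_le]
    rintro y ⟨i, k, j, l, hik, hjl, rfl⟩
    rw [SetLike.mem_coe, RingHom.mem_ker]
    show piAlg n d (X (i, j) * X (k, l) - X (i, l) * X (k, j)) = 0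
    simp only [map_sub, map_mul, piAlg, aeval_X]
    ring
  exact hle hx

lemma psi_isHomog (u : Fin d → ℕ) {g : MvPolynomial (Fin n) ℂ}
    (hg : g ∈ Vcomp n (∑ i, u i)) :
    (psi n d u g).IsWeightedHomogeneous (wfun n d) u := by
  conv_lhs => rw [← support_sum_monomial_coeff g]
  rw [map_sum]
  apply IsWeightedHomogeneous.sum
  intro γ hγ
  rw [psi_monomial]
  apply isWeightedHomogeneous_monomial
  apply weight_distrib
  have hdeg := hg (mem_support_iff.1 hγ)
  rw [← weight_one_eq]
  exact hdeg

lemma piL_psi (u : Fin d → ℕ) {g : MvPolynomial (Fin n) ℂ}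
    (hg : g ∈ Vcomp n (∑ i, u i)) :
    piL n d (psi n d u g) = g := by
  conv_lhs => rw [← support_sum_monomial_coeff g]
  conv_rhs => rw [← support_sum_monomial_coeff g]
  rw [map_sum, map_sum]
  apply Finset.sum_congr rfl
  intro γ hγ
  apply piL_psi_monomial
  rw [← weight_one_eq]
  exact hg (mem_support_iff.1 hγ)

lemma sub_psi_piL_mem_IR (u : Fin d → ℕ) {F : MvPolynomial (Fin d × Fin n) ℂ}
    (hF : F.IsWeightedHomogeneous (wfun n d) u) :
    F - psi n d u (piL n d F) ∈ IR n d := by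
  set L : MvPolynomial (Fin d × Fin n) ℂ →ₗ[ℂ] MvPolynomial (Fin d × Fin n) ℂ :=
    LinearMap.id - (psi n d u) ∘ₗ (piL n d) with hL
  have hLF : F - psi n d u (piL n d F) = L F := by simp [hL]
  rw [hLF, ← support_sum_monomial_coeff F, map_sum]
  apply sum_mem
  intro β hβ
  have hwβ := hF (mem_support_iff.1 hβ)
  have hrow : ∀ i, ∑ j, β (i, j) = u i := by
    intro i
    rw [← weight_wfun_apply β i, hwβ]
  have hcol : ∀ j, ∑ i, β (i, j) = (Finsupp.mapDomain Prod.snd β) j := fun j =>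
    (mapDomain_snd_apply β j).symm
  have hstr := straighten u (Finsupp.mapDomain Prod.snd β) β hrow hcol
  have hL2 : L (monomial β (coeff β F)) = C (coeff β F) *
      ((monomial β (1 : ℂ)) - monomial (distrib n d u (Finsupp.mapDomain Prod.snd β)) 1) := by
    simp only [hL, LinearMap.sub_apply, LinearMap.id_apply, LinearMap.comp_apply,
      piL_monomial, psi_monomial, mul_sub, C_mul_monomial, mul_one]
  rw [hL2]
  exact Ideal.mul_mem_left _ _ hstr

lemma piL_mem_Vcomp (u : Fin d → ℕ) {F : MvPolynomial (Fin d × Fin n) ℂ}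
    (hF : F.IsWeightedHomogeneous (wfun n d) u) :
    piL n d F ∈ Vcomp n (∑ i, u i) := by
  rw [← support_sum_monomial_coeff F, map_sum]
  apply sum_mem
  intro β hβ
  rw [piL_monomial]
  show (monomial (Finsupp.mapDomain Prod.snd β) (coeff β F)) ∈
    weightedHomogeneousSubmodule ℂ (1 : Fin n → ℕ) (∑ i, u i)
  rw [mem_weightedHomogeneousSubmodule]
  apply isWeightedHomogeneous_monomial
  rw [weight_one_eq]
  have hwβ := hF (mem_support_iff.1 hβ)
  calc ∑ j, (Finsupp.mapDomain Prod.snd β) j = ∑ j, ∑ i, β (i, j) :=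
        Finset.sum_congr rfl fun j _ => mapDomain_snd_apply β j
    _ = ∑ i, ∑ j, β (i, j) := Finset.sum_comm
    _ = ∑ i, u i := Finset.sum_congr rfl fun i _ => by
        rw [← weight_wfun_apply β i, hwβ]

lemma prod_X_eq_monomial {ι : Type*} (s : Finset ι) (h : ι → Fin d × Fin n) :
    (∏ i ∈ s, (X (h i) : MvPolynomial (Fin d × Fin n) ℂ)) =
      monomial (∑ i ∈ s, Finsupp.single (h i) 1) 1 := by
  classical
  induction s using Finset.induction_on with
  | empty => simp
  | insert _ _ hx ih =>
    rename_i a s'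
    have hX : (X (h a) : MvPolynomial (Fin d × Fin n) ℂ) =
        monomial (Finsupp.single (h a) 1) 1 := rfl
    rw [Finset.prod_insert hx, Finset.sum_insert hx, ih, hX, monomial_mul, one_mul]

lemma prod_X_eq_monomial_V {ι : Type*} (s : Finset ι) (h : ι → Fin n) :
    (∏ i ∈ s, (X (h i) : MvPolynomial (Fin n) ℂ)) =
      monomial (∑ i ∈ s, Finsupp.single (h i) 1) 1 := by
  classical
  induction s using Finset.induction_on with
  | empty => simp
  | insert _ _ hx ih =>
    rename_i a s'
    have hX : (X (h a) : MvPolynomial (Fin n) ℂ) =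
        monomial (Finsupp.single (h a) 1) 1 := rfl
    rw [Finset.prod_insert hx, Finset.sum_insert hx, ih, hX, monomial_mul, one_mul]

lemma weight_B_ones (jf : Fin d → Fin n) :
    Finsupp.weight (wfun n d) (∑ i, Finsupp.single (i, jf i) (1 : ℕ)) =
      fun _ : Fin d => (1 : ℕ) := by
  funext i'
  rw [weight_wfun_apply]
  have h : ∀ j : Fin n, ((∑ i, Finsupp.single (i, jf i) (1 : ℕ)) (i', j)) =
      ∑ i, (Finsupp.single (i, jf i) (1 : ℕ)) (i', j) := fun j => by
    rw [Finsupp.finset_sum_apply]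
  rw [Finset.sum_congr rfl fun j _ => h j, Finset.sum_comm,
    Finset.sum_congr rfl fun i _ => sum_single_row (i, jf i) 1 i']
  simp

lemma mapDomain_B (jf : Fin d → Fin n) :
    Finsupp.mapDomain Prod.snd (∑ i, Finsupp.single (i, jf i) (1 : ℕ)) =
      ∑ i, Finsupp.single (jf i) (1 : ℕ) := by
  rw [Finsupp.mapDomain_finset_sum]
  apply Finset.sum_congr rfl
  intro i _
  exact Finsupp.mapDomain_single

end PolyLevel
section Structural

variable {n d : ℕ}

lemma weight_single_one (p : Fin d × Fin n) :
    Finsupp.weight (wfun n d) (Finsupp.single p (1 : ℕ)) = Pi.single p.1 1 := by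
  rw [Finsupp.weight_apply, Finsupp.sum_single_index]
  · rw [one_smul]
  · rw [zero_smul]

lemma IR_wHC_mem {x : MvPolynomial (Fin d × Fin n) ℂ} (hx : x ∈ IR n d) (v : Fin d → ℕ) :
    weightedHomogeneousComponent (wfun n d) v x ∈ IR n d := by
  rw [IR] at hx
  obtain ⟨cf, hsupp, hsum⟩ := mem_span_set.1 hx
  rw [← hsum, Finsupp.sum, map_sum]
  refine sum_mem fun t ht => ?_
  obtain ⟨i0, k0, j0, l0, hik, hjl, hgeq⟩ := hsupp ht
  rw [smul_eq_mul, hgeq]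
  set β1 : (Fin d × Fin n) →₀ ℕ :=
    Finsupp.single (i0, j0) 1 + Finsupp.single (k0, l0) 1 with hβ1
  set β2 : (Fin d × Fin n) →₀ ℕ :=
    Finsupp.single (i0, l0) 1 + Finsupp.single (k0, j0) 1 with hβ2
  have hX : ∀ r : Fin d × Fin n, (X r : MvPolynomial (Fin d × Fin n) ℂ) =
      monomial (Finsupp.single r 1) 1 := fun r => rfl
  have hm1 : (X (i0, j0) * X (k0, l0) : MvPolynomial (Fin d × Fin n) ℂ) =
      monomial β1 1 := by rw [hX, hX, monomial_mul, one_mul, hβ1]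
  have hm2 : (X (i0, l0) * X (k0, j0) : MvPolynomial (Fin d × Fin n) ℂ) =
      monomial β2 1 := by rw [hX, hX, monomial_mul, one_mul, hβ2]
  have hw1 : Finsupp.weight (wfun n d) β1 = Pi.single i0 1 + Pi.single k0 1 := by
    rw [hβ1, map_add, weight_single_one, weight_single_one]
  have hw2 : Finsupp.weight (wfun n d) β2 = Pi.single i0 1 + Pi.single k0 1 := by
    rw [hβ2, map_add, weight_single_one, weight_single_one]
  rw [mul_sub, hm1, hm2, map_sub]
  by_cases hv : ∃ u' : Fin d → ℕ, u' + (Pi.single i0 1 + Pi.single k0 1) = v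
  · obtain ⟨u', rfl⟩ := hv
    rw [← hw1, wHC_mul_monomial, hw1, ← hw2, wHC_mul_monomial]
    rw [← mul_sub, ← hm1, ← hm2]
    exact Ideal.mul_mem_left _ _
      (Ideal.subset_span ⟨i0, k0, j0, l0, hik, hjl, rfl⟩)
  · push_neg at hv
    rw [wHC_mul_monomial_zero _ _ _ _ (fun u' => by rw [hw1]; exact hv u'),
      wHC_mul_monomial_zero _ _ _ _ (fun u' => by rw [hw2]; exact hv u'), sub_zero]
    exact zero_mem _

lemma upsilon_comp (I : Ideal (MvPolynomial (Fin n) ℂ))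
    {x : MvPolynomial (Fin d × Fin n) ℂ} (hx : x ∈ Upsilon n d I) (v : Fin d → ℕ) :
    piL n d (weightedHomogeneousComponent (wfun n d) v x) ∈ I := by
  rw [Upsilon, Submodule.mem_sup] at hx
  obtain ⟨y, hy, z, hz, rfl⟩ := hx
  rw [map_add, map_add]
  apply I.add_mem
  · have h1 : weightedHomogeneousComponent (wfun n d) v y ∈ IR n d :=
      IR_wHC_mem (by simpa using hy) v
    rw [piL_IR h1]
    exact I.zero_mem
  · refine Submodule.iSup_induction _
      (motive := fun z => piL n d (weightedHomogeneousComponent (wfun n d) v z) ∈ I) hz ?_ ?_ ?_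
    · rintro u z ⟨g, hg, rfl⟩
      simp only [SetLike.mem_coe, Submodule.mem_inf] at hg
      obtain ⟨hgI, hgV⟩ := hg
      have hhom := psi_isHomog u hgV
      by_cases hvu : v = u
      · have heq : weightedHomogeneousComponent (wfun n d) v (psi n d u g) = psi n d u g := by
          rw [hvu]
          exact hhom.weightedHomogeneousComponent_same
        rw [heq, piL_psi u hgV]
        simpa using hgI
      · rw [hhom.weightedHomogeneousComponent_ne v hvu, map_zero]
        exact I.zero_mem
    · rw [map_zero, map_zero]
      exact I.zero_mem
    · intro a b ha hb
      rw [map_add, map_add]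
      exact I.add_mem ha hb

lemma comp_mem_upsilon (I : Ideal (MvPolynomial (Fin n) ℂ)) (u : Fin d → ℕ)
    {F : MvPolynomial (Fin d × Fin n) ℂ} (hF : F.IsWeightedHomogeneous (wfun n d) u)
    (hg : piL n d F ∈ I) : F ∈ Upsilon n d I := by
  have hV := piL_mem_Vcomp u hF
  have h1 : psi n d u (piL n d F) ∈ Upsilon n d I := by
    rw [Upsilon]
    apply Submodule.mem_sup_right
    apply Submodule.mem_iSup_of_mem u
    exact ⟨piL n d F, Submodule.mem_inf.2 ⟨by simpa using hg, hV⟩, rfl⟩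
  have h2 : F - psi n d u (piL n d F) ∈ Upsilon n d I := by
    rw [Upsilon]
    apply Submodule.mem_sup_left
    simpa using sub_psi_piL_mem_IR u hF
  have h3 := Submodule.add_mem _ h2 h1
  rw [sub_add_cancel] at h3
  exact h3

lemma X_mul_psi_sub_mem (u : Fin d → ℕ) (p : Fin d × Fin n)
    {g : MvPolynomial (Fin n) ℂ} (hgV : g ∈ Vcomp n (∑ i, u i)) :
    X p * psi n d u g - psi n d (u + Pi.single p.1 1) (X p.2 * g) ∈ IR n d := by
  set u' : Fin d → ℕ := u + Pi.single p.1 1 with hu'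
  set L2 : MvPolynomial (Fin n) ℂ →ₗ[ℂ] MvPolynomial (Fin d × Fin n) ℂ :=
    (LinearMap.mulLeft ℂ (X p)) ∘ₗ psi n d u -
      (psi n d u') ∘ₗ (LinearMap.mulLeft ℂ (X p.2)) with hL2
  have hLg : X p * psi n d u g - psi n d u' (X p.2 * g) = L2 g := by
    simp [hL2, LinearMap.mulLeft_apply]
  rw [hLg, ← support_sum_monomial_coeff g, map_sum]
  refine sum_mem fun γ hγ => ?_
  have hdeg : ∑ j, γ j = ∑ i, u i := by
    rw [← weight_one_eq]
    exact hgV (mem_support_iff.1 hγ)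
  have hXmon : (X p.2 : MvPolynomial (Fin n) ℂ) * monomial γ (coeff γ g) =
      monomial (Finsupp.single p.2 1 + γ) (coeff γ g) := by
    have hX : (X p.2 : MvPolynomial (Fin n) ℂ) = monomial (Finsupp.single p.2 1) 1 := rfl
    rw [hX, monomial_mul, one_mul]
  have hXmon2 : (X p : MvPolynomial (Fin d × Fin n) ℂ) *
      monomial (distrib n d u γ) (coeff γ g) =
        monomial (Finsupp.single p 1 + distrib n d u γ) (coeff γ g) := by
    have hX : (X p : MvPolynomial (Fin d × Fin n) ℂ) =
      monomial (Finsupp.single p 1) 1 := rfl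
    rw [hX, monomial_mul, one_mul]
  have hL2mon : L2 (monomial γ (coeff γ g)) = C (coeff γ g) *
      ((monomial (Finsupp.single p 1 + distrib n d u γ) 1) -
        monomial (distrib n d u' (Finsupp.single p.2 1 + γ)) 1) := by
    simp only [hL2, LinearMap.sub_apply, LinearMap.comp_apply, LinearMap.mulLeft_apply,
      psi_monomial, hXmon, hXmon2, mul_sub, C_mul_monomial, mul_one]
  rw [hL2mon]
  apply Ideal.mul_mem_left
  apply straighten
  · intro i
    simp only [Finsupp.add_apply, Finset.sum_add_distrib, sum_single_row]
    rw [rowsum_distrib u γ hdeg i, hu', Pi.add_apply, Pi.single_apply]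
    by_cases h : p.1 = i
    · rw [if_pos h, if_pos h.symm]
      omega
    · rw [if_neg h, if_neg fun hh => h hh.symm]
      omega
  · intro j
    simp only [Finsupp.add_apply, Finset.sum_add_distrib, sum_single_col]
    rw [colsum_distrib u γ hdeg j, Finsupp.single_apply]

lemma X_mul_mem_upsilon (I : Ideal (MvPolynomial (Fin n) ℂ)) (p : Fin d × Fin n)
    {x : MvPolynomial (Fin d × Fin n) ℂ} (hx : x ∈ Upsilon n d I) :
    X p * x ∈ Upsilon n d I := by
  rw [Upsilon, Submodule.mem_sup] at hx
  obtain ⟨y, hy, z, hz, rfl⟩ := hx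
  rw [mul_add]
  apply add_mem
  · rw [Upsilon]
    apply Submodule.mem_sup_left
    simpa using Ideal.mul_mem_left _ (X p) (by simpa using hy)
  · refine Submodule.iSup_induction _ (motive := fun z => X p * z ∈ Upsilon n d I) hz ?_ ?_ ?_
    · rintro u z ⟨g, hg, rfl⟩
      simp only [SetLike.mem_coe, Submodule.mem_inf] at hg
      obtain ⟨hgI, hgV⟩ := hg
      set u' : Fin d → ℕ := u + Pi.single p.1 1 with hu'
      have hXg : X p.2 * g ∈ I := Ideal.mul_mem_left _ _ (by simpa using hgI)
      have hsum' : ∑ i, u' i = 1 + ∑ i, u i := by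
        rw [hu']
        simp only [Pi.add_apply, Finset.sum_add_distrib, Finset.sum_pi_single]
        simp [add_comm]
      have hXgV : X p.2 * g ∈ Vcomp n (∑ i, u' i) := by
        rw [hsum']
        exact (isHomogeneous_X ℂ p.2).mul hgV
      have hdiff := X_mul_psi_sub_mem u p hgV
      have hmem1 : psi n d u' (X p.2 * g) ∈ Upsilon n d I := by
        rw [Upsilon]
        apply Submodule.mem_sup_right
        apply Submodule.mem_iSup_of_mem u'
        exact ⟨X p.2 * g, Submodule.mem_inf.2 ⟨by simpa using hXg, hXgV⟩, rfl⟩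
      have hmem2 : X p * psi n d u g - psi n d u' (X p.2 * g) ∈ Upsilon n d I := by
        rw [Upsilon]
        apply Submodule.mem_sup_left
        simpa using hdiff
      have h3 := add_mem hmem2 hmem1
      rw [sub_add_cancel] at h3
      exact h3
    · rw [mul_zero]
      exact zero_mem _
    · intro a b ha hb
      rw [mul_add]
      exact add_mem ha hb

lemma mul_mem_upsilon (I : Ideal (MvPolynomial (Fin n) ℂ))
    (s x : MvPolynomial (Fin d × Fin n) ℂ) (hx : x ∈ Upsilon n d I) :
    s * x ∈ Upsilon n d I := by
  induction s using MvPolynomial.induction_on with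
  | C a =>
    rw [← smul_eq_C_mul]
    exact Submodule.smul_mem _ a hx
  | add f g hf hg =>
    rw [add_mul]
    exact add_mem hf hg
  | mul_X f p hf =>
    rw [mul_comm f (X p), mul_assoc]
    exact X_mul_mem_upsilon I p hf
end Structural
section Saturation

variable {n d : ℕ}

lemma sat_iter (I : Ideal (MvPolynomial (Fin n) ℂ))
    (hsat : ∀ f : MvPolynomial (Fin n) ℂ, (∀ b ∈ BY n, f * b ∈ I) → f ∈ I) :
    ∀ (k : ℕ) (g : MvPolynomial (Fin n) ℂ),
      (∀ jf : Fin k → Fin n, g * ∏ i, X (jf i) ∈ I) → g ∈ I := by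
  intro k
  induction k with
  | zero =>
    intro g hg
    simpa using hg Fin.elim0
  | succ k IH =>
    intro g hg
    apply IH
    intro jf
    apply hsat
    intro b hb
    have hBY : b ∈ Submodule.span (MvPolynomial (Fin n) ℂ) (Set.range X) := hb
    refine Submodule.span_induction
      (p := fun b _ => (g * ∏ i, X (jf i)) * b ∈ I) ?_ ?_ ?_ ?_ hBY
    · rintro x ⟨j0, rfl⟩
      have hg' := hg (Fin.cons j0 jf)
      rw [Fin.prod_univ_succ] at hg'
      simp only [Fin.cons_zero, Fin.cons_succ] at hg'
      have heq : (g * ∏ i, X (jf i)) * X j0 =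
          g * (X j0 * ∏ i : Fin k, X (jf i)) := by ring
      rw [heq]
      exact hg'
    · show (g * ∏ i, X (jf i)) * 0 ∈ I
      rw [mul_zero]
      exact I.zero_mem
    · intro x y _ _ hx hy
      show (g * ∏ i, X (jf i)) * (x + y) ∈ I
      rw [mul_add]
      exact I.add_mem hx hy
    · intro a x _ hx
      show (g * ∏ i, X (jf i)) * (a • x) ∈ I
      rw [smul_eq_mul, mul_left_comm]
      exact Ideal.mul_mem_left _ _ hx

theorem stmt_7' (n d : ℕ) (hn : 0 < n) (hd : 0 < d)
    (I : Ideal (MvPolynomial (Fin n) ℂ)) (hhom : IsHomogV n I)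
    (hsat : ∀ f : MvPolynomial (Fin n) ℂ, (∀ b ∈ BY n, f * b ∈ I) → f ∈ I) :
    (∀ s x : MvPolynomial (Fin d × Fin n) ℂ,
        x ∈ Upsilon n d I → s * x ∈ Upsilon n d I) ∧
      (∀ f : MvPolynomial (Fin d × Fin n) ℂ,
        (∀ b ∈ BX n d, f * b ∈ Upsilon n d I) → f ∈ Upsilon n d I) := by
  constructor
  · intro s x hx
    exact mul_mem_upsilon I s x hx
  · intro f hf
    have hcomp : ∀ u : Fin d → ℕ,
        piL n d (weightedHomogeneousComponent (wfun n d) u f) ∈ I := by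
      intro u
      apply sat_iter I hsat d
      intro jf
      set B : (Fin d × Fin n) →₀ ℕ := ∑ i, Finsupp.single (i, jf i) 1 with hB
      have hbBX : (∏ i, (X (i, jf i) : MvPolynomial (Fin d × Fin n) ℂ)) ∈ BX n d := by
        rw [BX]
        apply Ideal.prod_mem_prod
        intro i _
        exact Ideal.subset_span ⟨jf i, rfl⟩
      have hfb := hf _ hbBX
      have h1 := upsilon_comp I hfb (u + fun _ => 1)
      rw [prod_X_eq_monomial Finset.univ (fun i => (i, jf i))] at h1
      have hw : Finsupp.weight (wfun n d) B = fun _ : Fin d => (1 : ℕ) :=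
        weight_B_ones jf
      have h2 : weightedHomogeneousComponent (wfun n d) (u + fun _ => 1)
          (f * monomial B 1) =
            weightedHomogeneousComponent (wfun n d) u f * monomial B 1 := by
        rw [← hw]
        exact wHC_mul_monomial f B 1 u
      rw [h2] at h1
      have h3 : piL n d (weightedHomogeneousComponent (wfun n d) u f * monomial B 1) =
          piL n d (weightedHomogeneousComponent (wfun n d) u f) *
            piL n d (monomial B 1) := by
        show piAlg n d (_ * _) = _
        rw [map_mul]
        rfl
      rw [h3, piL_monomial, mapDomain_B] at h1
      rw [← prod_X_eq_monomial_V Finset.univ jf] at h1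
      exact h1
    have hdecomp := sum_weightedHomogeneousComponent (wfun n d) f
    rw [← hdecomp, finsum_eq_sum _ (weightedHomogeneousComponent_finsupp f)]
    apply sum_mem
    intro u _
    exact comp_mem_upsilon I u (weightedHomogeneousComponent_isWeightedHomogeneous u f)
      (hcomp u)

end Saturation

/-- Proposition 4.5: if `I ⊆ V` is a homogeneous `B_Y`-saturated
ideal, then `Υ(I)` is a `B_X`-saturated ideal of `S`. -/
theorem stmt_7 (n d : ℕ) (hn : 0 < n) (hd : 0 < d)
    (I : Ideal (MvPolynomial (Fin n) ℂ)) (hhom : IsHomogV n I)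
    (hsat : ∀ f : MvPolynomial (Fin n) ℂ, (∀ b ∈ BY n, f * b ∈ I) → f ∈ I) :
    (∀ s x : MvPolynomial (Fin d × Fin n) ℂ,
        x ∈ Upsilon n d I → s * x ∈ Upsilon n d I) ∧
      (∀ f : MvPolynomial (Fin d × Fin n) ℂ,
        (∀ b ∈ BX n d, f * b ∈ Upsilon n d I) → f ∈ Upsilon n d I) :=
  stmt_7' n d hn hd I hhom hsat

end BorderComon
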